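/- arXiv:2303.05129 — 5 statements merged into one kernel-verified Lean document; each statement's English description precedes it below -/
import Mathlib

section
/- Let (Λ, k) be a basis element and i ≥ −1 an integer. If lev_i(Λ, k) ≤ i, then WD(Λ, k) ≤ n − 1, and WD(Λ, k) = n − 1 if and only if Λ is the zero partition and k = 1. -/
/-- Weight of a partition (finitely supported sequence of multiplicities). -/
def wt (Λ : ℕ →₀ ℕ) : ℕ := Λ.sum fun m c => m * c

/-- Degree (number of parts, with multiplicity) of a partition. -/
def deg (Λ : ℕ →₀ ℕ) : ℕ := Λ.sum fun _ c => c

/-- Basis element of the integral Lie ring of partitions: a pair (Λ, k) with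
1 ≤ k ≤ n and all parts of Λ in {1,…,k-1}. -/
def IsBasisElt (n : ℕ) (Λ : ℕ →₀ ℕ) (k : ℕ) : Prop :=
  1 ≤ k ∧ k ≤ n ∧ Λ 0 = 0 ∧ ∀ m, k ≤ m → Λ m = 0

/-- The weight-degree function. -/
def WD (n : ℕ) (Λ : ℕ →₀ ℕ) (k : ℕ) : ℤ :=
  (wt Λ : ℤ) - (deg Λ : ℤ) + (n : ℤ) - (k : ℤ)

/-- h_i = ⌊(i-1)/(n-1)⌋ + 1. -/
def hh (n : ℕ) (i : ℤ) : ℤ := (i - 1).fdiv ((n : ℤ) - 1) + 1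

/-- r_i = i - (h_i - 1)(n-1). -/
def rr (n : ℕ) (i : ℤ) : ℤ := i - (hh n i - 1) * ((n : ℤ) - 1)

/-- The i-th level function lev_i(Λ,k) = h_i·WD(Λ,k) + deg(Λ) - 1. -/
def lev (n : ℕ) (i : ℤ) (Λ : ℕ →₀ ℕ) (k : ℕ) : ℤ :=
  hh n i * WD n Λ k + (deg Λ : ℤ) - 1

/-- N_i = set of basis elements with lev_j ≤ j for some -1 ≤ j ≤ i. -/
def Nset (n : ℕ) (i : ℤ) : Set ((ℕ →₀ ℕ) × ℕ) :=
  {p | IsBasisElt n p.1 p.2 ∧ ∃ j : ℤ, -1 ≤ j ∧ j ≤ i ∧ lev n j p.1 p.2 ≤ j}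

/-- L_i = set of basis elements for which i is the least index j ≥ -1 with lev_j = j. -/
def Lset (n : ℕ) (i : ℤ) : Set ((ℕ →₀ ℕ) × ℕ) :=
  {p | IsBasisElt n p.1 p.2 ∧ lev n i p.1 p.2 = i ∧
    ∀ j : ℤ, -1 ≤ j → lev n j p.1 p.2 = j → i ≤ j}

/-- The partition function p(s). -/
def pfun (s : ℕ) : ℕ := Fintype.card (Nat.Partition s)

/-- b_m = Σ_{s=0}^m p(s). -/
def bnat (m : ℕ) : ℕ := ∑ s ∈ Finset.range (m + 1), pfun s

/-- c_m = Σ_{s=0}^m b_s. -/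
def cnat (m : ℕ) : ℕ := ∑ s ∈ Finset.range (m + 1), bnat s

/-- b extended to ℤ, with b_m = 0 for m < 0. -/
def bint (m : ℤ) : ℕ := if m < 0 then 0 else bnat m.toNat

/-- The period map per(Λ,k) = (Λ + (n-1-WD(Λ,k))·e₁, k). -/
noncomputable def per (n : ℕ) (p : (ℕ →₀ ℕ) × ℕ) : (ℕ →₀ ℕ) × ℕ :=
  (p.1 + Finsupp.single 1 (((n : ℤ) - 1 - WD n p.1 p.2).toNat), p.2)


lemma deg_eq_zero_iff {Λ : ℕ →₀ ℕ} (h : deg Λ = 0) : Λ = 0 := by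
  ext a
  by_cases ha : a ∈ Λ.support
  · have hle : Λ a ≤ Λ.support.sum (fun m => Λ m) :=
      Finset.single_le_sum (f := fun m => Λ m) (fun _ _ => Nat.zero_le _) ha
    have : Λ.support.sum (fun m => Λ m) = 0 := h
    simp only [Finsupp.coe_zero, Pi.zero_apply]
    omega
  · simpa using Finsupp.notMem_support_iff.mp ha

lemma wt_le_of_parts {Λ : ℕ →₀ ℕ} {k : ℕ} (hk : ∀ m, k ≤ m → Λ m = 0) :
    wt Λ ≤ (k - 1) * deg Λ := by
  unfold wt deg Finsupp.sum
  rw [Finset.mul_sum]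
  apply Finset.sum_le_sum
  intro m hm
  have hne : Λ m ≠ 0 := Finsupp.mem_support_iff.mp hm
  have hmk : m ≤ k - 1 := by
    by_contra hc; push_neg at hc
    exact hne (hk m (by omega))
  exact Nat.mul_le_mul_right _ hmk

theorem stmt1 (n : ℕ) (hn : 3 ≤ n) (Λ : ℕ →₀ ℕ) (k : ℕ) (h : IsBasisElt n Λ k)
    (i : ℤ) (hi : -1 ≤ i) (hlev : lev n i Λ k ≤ i) :
    WD n Λ k ≤ (n : ℤ) - 1 ∧ (WD n Λ k = (n : ℤ) - 1 ↔ Λ = 0 ∧ k = 1) := by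
  obtain ⟨hk1, hkn, h0, hparts⟩ := h
  have hn1 : (0:ℤ) < (n:ℤ) - 1 := by
    have : (3:ℤ) ≤ (n:ℤ) := by exact_mod_cast hn
    linarith
  -- facts about H = hh n i
  set H : ℤ := hh n i with hHdef
  have hfd : H = (i - 1) / ((n:ℤ) - 1) + 1 := by
    rw [hHdef, hh, Int.fdiv_eq_ediv_of_nonneg _ (le_of_lt hn1)]
  have hdm := Int.mul_ediv_add_emod (i - 1) ((n:ℤ) - 1)
  have hr0 : 0 ≤ (i - 1) % ((n:ℤ) - 1) := Int.emod_nonneg _ (ne_of_gt hn1)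
  have hr1 : (i - 1) % ((n:ℤ) - 1) < (n:ℤ) - 1 := Int.emod_lt_of_pos _ hn1
  set q : ℤ := (i - 1) / ((n:ℤ) - 1) with hq
  -- i ≤ H * (n-1)
  have hiH : i ≤ H * ((n:ℤ) - 1) := by
    have : i - 1 = ((n:ℤ) - 1) * q + (i - 1) % ((n:ℤ) - 1) := hdm.symm
    rw [hfd]; nlinarith
  -- H ≥ 0
  have hH0 : 0 ≤ H := by
    rw [hfd]
    have hq2 : -2 < q := by
      by_contra hc
      push_neg at hc
      have : ((n:ℤ) - 1) * q ≤ ((n:ℤ) - 1) * (-2) := by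
        apply mul_le_mul_of_nonneg_left hc (le_of_lt hn1)
      nlinarith
    omega
  -- deg = 0 case
  by_cases hd : deg Λ = 0
  · have hΛ : Λ = 0 := deg_eq_zero_iff hd
    have hwt : wt Λ = 0 := by rw [hΛ]; simp [wt]
    have hWD : WD n Λ k = (n:ℤ) - (k:ℤ) := by
      simp [WD, hwt, hd]
    constructor
    · rw [hWD]
      have : (1:ℤ) ≤ (k:ℤ) := by exact_mod_cast hk1
      linarith
    · constructor
      · intro he
        rw [hWD] at he
        have : (k:ℤ) = 1 := by linarith
        exact ⟨hΛ, by exact_mod_cast this⟩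
      · rintro ⟨-, hk⟩
        rw [hWD, hk]; push_cast; ring
  -- deg ≥ 1 case: show WD < n - 1
  · have hd1 : 1 ≤ deg Λ := Nat.one_le_iff_ne_zero.mpr hd
    have hwtle : wt Λ ≤ (k - 1) * deg Λ := wt_le_of_parts hparts
    have hwtleZ : (wt Λ : ℤ) ≤ ((k:ℤ) - 1) * (deg Λ : ℤ) := by
      have : ((k - 1 : ℕ) : ℤ) = (k:ℤ) - 1 := by
        have : 1 ≤ k := hk1; omega
      calc (wt Λ : ℤ) ≤ ((k-1) * deg Λ : ℕ) := by exact_mod_cast hwtle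
        _ = ((k:ℤ) - 1) * (deg Λ : ℤ) := by push_cast [this]; ring
    have hWDlt : WD n Λ k < (n:ℤ) - 1 := by
      by_contra hc
      push_neg at hc
      -- lev = H * WD + deg - 1 ≤ i ≤ H (n-1) ≤ H * WD
      have hlev' : H * WD n Λ k + (deg Λ : ℤ) - 1 ≤ i := hlev
      have hHW : H * ((n:ℤ) - 1) ≤ H * WD n Λ k :=
        mul_le_mul_of_nonneg_left hc hH0
      have hdZ : (1:ℤ) ≤ (deg Λ : ℤ) := by exact_mod_cast hd1
      have hdeg1 : (deg Λ : ℤ) = 1 := by linarith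
      -- so wt ≥ k from WD ≥ n-1
      have : (wt Λ : ℤ) - (deg Λ : ℤ) + (n:ℤ) - (k:ℤ) ≥ (n:ℤ) - 1 := hc
      have hwtge : (k:ℤ) ≤ (wt Λ : ℤ) := by linarith
      rw [hdeg1] at hwtleZ
      linarith
    refine ⟨le_of_lt hWDlt, ?_, ?_⟩
    · intro he; exact absurd he (ne_of_lt hWDlt)
    · rintro ⟨hΛ, -⟩
      exfalso
      apply hd
      rw [hΛ]; simp [deg]
end

section
/- Let (Λ, k) be a basis element. If lev_i(Λ, k) ≤ i for some integer i ≥ −1, then there exists an integer j with −1 ≤ j ≤ i such that lev_j(Λ, k) = j. -/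
lemma deg_le_wt (Λ : ℕ →₀ ℕ) (h0 : Λ 0 = 0) : deg Λ ≤ wt Λ := by
  unfold deg wt Finsupp.sum
  apply Finset.sum_le_sum
  intro m hm
  have : m ≠ 0 := by
    intro rfl'
    subst rfl'
    exact (Finsupp.mem_support_iff.mp hm) h0
  have : 1 ≤ m := Nat.one_le_iff_ne_zero.mpr this
  nlinarith [Nat.zero_le (Λ m)]

lemma WD_nonneg (n : ℕ) (Λ : ℕ →₀ ℕ) (k : ℕ) (h : IsBasisElt n Λ k) :
    0 ≤ WD n Λ k := by
  obtain ⟨_, hkn, h0, _⟩ := h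
  have h1 := deg_le_wt Λ h0
  unfold WD
  have : (deg Λ : ℤ) ≤ (wt Λ : ℤ) := by exact_mod_cast h1
  have : (k : ℤ) ≤ (n : ℤ) := by exact_mod_cast hkn
  omega

lemma hh_mono_step (n : ℕ) (hn : 3 ≤ n) (j : ℤ) :
    hh n j ≤ hh n (j + 1) := by
  unfold hh
  have hd : (0 : ℤ) < (n : ℤ) - 1 := by
    have : (3 : ℤ) ≤ (n : ℤ) := by exact_mod_cast hn
    omega
  rw [Int.fdiv_eq_ediv_of_nonneg _ (le_of_lt hd), Int.fdiv_eq_ediv_of_nonneg _ (le_of_lt hd)]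
  have := Int.ediv_le_ediv hd (show j - 1 ≤ j + 1 - 1 by omega)
  omega

lemma hh_lev_ivt (f : ℤ → ℤ) (hf : ∀ j, f j - 1 ≤ f (j + 1)) :
    ∀ N : ℕ, ∀ a b : ℤ, b - a = N → 0 ≤ f a → f b ≤ 0 →
      ∃ j, a ≤ j ∧ j ≤ b ∧ f j = 0 := by
  intro N
  induction N with
  | zero =>
    intro a b hab ha hb
    have hab' : a = b := by omega
    subst hab'
    exact ⟨a, le_refl a, le_refl a, le_antisymm hb ha⟩
  | succ N ih =>
    intro a b hab ha hb
    by_cases h0 : f a = 0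
    · exact ⟨a, le_refl a, by omega, h0⟩
    · have h1 : 1 ≤ f a := by omega
      have h2 : 0 ≤ f (a + 1) := by have := hf a; omega
      obtain ⟨j, hj1, hj2, hj3⟩ := ih (a + 1) b (by omega) h2 hb
      exact ⟨j, by omega, hj2, hj3⟩

theorem stmt3 (n : ℕ) (hn : 3 ≤ n) (Λ : ℕ →₀ ℕ) (k : ℕ) (h : IsBasisElt n Λ k)
    (i : ℤ) (hi : -1 ≤ i) (hlev : lev n i Λ k ≤ i) :
    ∃ j : ℤ, -1 ≤ j ∧ j ≤ i ∧ lev n j Λ k = j := by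
  set f : ℤ → ℤ := fun j => lev n j Λ k - j with hf
  have hWD := WD_nonneg n Λ k h
  have hstep : ∀ j, f j - 1 ≤ f (j + 1) := by
    intro j
    have hmono := hh_mono_step n hn j
    have : 0 ≤ (hh n (j + 1) - hh n j) * WD n Λ k :=
      mul_nonneg (by omega) hWD
    simp only [hf, lev]
    nlinarith
  -- f (-1) = deg Λ ≥ 0
  have hd : (0 : ℤ) < (n : ℤ) - 1 := by
    have : (3 : ℤ) ≤ (n : ℤ) := by exact_mod_cast hn
    omega
  have hhm1 : hh n (-1) = 0 := by
    unfold hh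
    rw [Int.fdiv_eq_ediv_of_nonneg _ (le_of_lt hd)]
    have he : (-1 : ℤ) - 1 = ((n : ℤ) - 3) + (-1) * ((n : ℤ) - 1) := by
      have : (3 : ℤ) ≤ (n : ℤ) := by exact_mod_cast hn
      ring
    rw [he, Int.add_mul_ediv_right _ _ (by omega : ((n : ℤ) - 1) ≠ 0)]
    have : ((n : ℤ) - 3) / ((n : ℤ) - 1) = 0 := by
      apply Int.ediv_eq_zero_of_lt
      · have : (3 : ℤ) ≤ (n : ℤ) := by exact_mod_cast hn
        omega
      · omega
    omega
  have hfm1 : 0 ≤ f (-1) := by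
    simp only [hf, lev, hhm1]
    have : (0 : ℤ) ≤ (deg Λ : ℤ) := Int.ofNat_nonneg _
    omega
  have hfi : f i ≤ 0 := by simp only [hf]; omega
  obtain ⟨j, hj1, hj2, hj3⟩ :=
    hh_lev_ivt f hstep (i - (-1)).toNat (-1) i (by omega) hfm1 hfi
  exact ⟨j, hj1, hj2, by simp only [hf] at hj3; omega⟩
end

section
/- Suppose (Λ, k) and (Θ, u) are basis elements with u < k and λ_u ≥ 1 (so that the Lie bracket [x^Λ ∂_k, x^Θ ∂_u] = λ_u x^Γ ∂_k is nonzero, where Γ = Λ − e_u + Θ, with e_u the indicator of part u). Then WD(Γ, k) = WD(Λ, k) + WD(Θ, u) − (n − 1) and, for every i ≥ −1, lev_i(Γ, k) = lev_i(Λ, k) + lev_i(Θ, u) − h_i(n − 1). -/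
lemma wt_add (A B : ℕ →₀ ℕ) : wt (A + B) = wt A + wt B := by
  unfold wt
  exact Finsupp.sum_add_index' (fun m => mul_zero m) (fun m c d => mul_add m c d)

lemma deg_add (A B : ℕ →₀ ℕ) : deg (A + B) = deg A + deg B := by
  unfold deg
  exact Finsupp.sum_add_index' (fun _ => rfl) (fun _ _ _ => rfl)

lemma wt_single (u c : ℕ) : wt (Finsupp.single u c) = u * c := by
  unfold wt; exact Finsupp.sum_single_index (mul_zero u)

lemma deg_single (u c : ℕ) : deg (Finsupp.single u c) = c := by
  unfold deg; exact Finsupp.sum_single_index rfl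

theorem stmt6 (n : ℕ) (hn : 3 ≤ n) (Λ Θ : ℕ →₀ ℕ) (k u : ℕ)
    (hΛ : IsBasisElt n Λ k) (hΘ : IsBasisElt n Θ u) (huk : u < k) (hu : 1 ≤ Λ u) :
    WD n (Λ + Θ - Finsupp.single u 1) k = WD n Λ k + WD n Θ u - ((n : ℤ) - 1) ∧
    ∀ i : ℤ, -1 ≤ i →
      lev n i (Λ + Θ - Finsupp.single u 1) k =
        lev n i Λ k + lev n i Θ u - hh n i * ((n : ℤ) - 1) := by
  have hle : Finsupp.single u 1 ≤ Λ + Θ := by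
    intro m
    rcases eq_or_ne m u with rfl | h
    · simpa using le_trans hu (by simp)
    · simp [Finsupp.single_eq_of_ne' (Ne.symm h)]
  have hcan : (Λ + Θ - Finsupp.single u 1) + Finsupp.single u 1 = Λ + Θ :=
    tsub_add_cancel_of_le hle
  have hwt : wt (Λ + Θ - Finsupp.single u 1) + u = wt Λ + wt Θ := by
    have := congrArg wt hcan
    rwa [wt_add, wt_add, wt_single, mul_one] at this
  have hdeg : deg (Λ + Θ - Finsupp.single u 1) + 1 = deg Λ + deg Θ := by
    have := congrArg deg hcan
    rwa [deg_add, deg_add, deg_single] at this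
  have hu' : (1:ℤ) ≤ (u:ℤ) := by exact_mod_cast hΘ.1
  have hWD : WD n (Λ + Θ - Finsupp.single u 1) k
      = WD n Λ k + WD n Θ u - ((n : ℤ) - 1) := by
    unfold WD
    have h1 : (wt (Λ + Θ - Finsupp.single u 1) : ℤ) + u = wt Λ + wt Θ := by
      exact_mod_cast hwt
    have h2 : (deg (Λ + Θ - Finsupp.single u 1) : ℤ) + 1 = deg Λ + deg Θ := by
      exact_mod_cast hdeg
    linarith
  refine ⟨hWD, fun i hi => ?_⟩
  unfold lev
  rw [hWD]
  have h2 : (deg (Λ + Θ - Finsupp.single u 1) : ℤ) + 1 = deg Λ + deg Θ := by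
    exact_mod_cast hdeg
  ring_nf
  linarith [mul_comm (hh n i) (WD n Λ k)]
end

section
/- (Characterization of L_i.) Let i ≥ 0. A basis element (Λ, k) belongs to L_i if and only if both: (a) n − k ≤ WD(Λ, k) < r_i, and (b) lev_i(Λ, k) = i. -/
lemma hh_eval (n : ℕ) (hn : 3 ≤ n) (h' r' : ℤ) (h1 : 1 ≤ r') (h2 : r' ≤ (n : ℤ) - 1) :
    hh n ((h' - 1) * ((n : ℤ) - 1) + r') = h' := by
  have hn1 : (0:ℤ) < (n:ℤ) - 1 := by omega
  unfold hh
  rw [Int.fdiv_eq_ediv_of_nonneg _ hn1.le]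
  rw [show (h' - 1) * ((n:ℤ) - 1) + r' - 1 = (r' - 1) + (h' - 1) * ((n:ℤ) - 1) by ring]
  rw [Int.add_mul_ediv_right _ _ hn1.ne', Int.ediv_eq_zero_of_lt (by omega) (by omega)]
  ring

lemma rr_bounds (n : ℕ) (hn : 3 ≤ n) (i : ℤ) : 1 ≤ rr n i ∧ rr n i ≤ (n:ℤ) - 1 := by
  have hn1 : (0:ℤ) < (n:ℤ) - 1 := by omega
  have hre : rr n i = (i - 1) % ((n:ℤ) - 1) + 1 := by
    unfold rr hh
    rw [Int.fdiv_eq_ediv_of_nonneg _ hn1.le, Int.emod_def]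
    ring
  have h1 := Int.emod_nonneg (i - 1) hn1.ne'
  have h2 := Int.emod_lt_of_pos (i - 1) hn1
  omega

lemma hh_nonneg (n : ℕ) (hn : 3 ≤ n) (i : ℤ) (hi : -1 ≤ i) : 0 ≤ hh n i := by
  have hn1 : (0:ℤ) < (n:ℤ) - 1 := by omega
  unfold hh
  rw [Int.fdiv_eq_ediv_of_nonneg _ hn1.le]
  have : (-1 : ℤ) ≤ (i - 1) / ((n:ℤ) - 1) := by
    rw [Int.le_ediv_iff_mul_le hn1]
    omega
  omega

lemma wt_le_int (Λ : ℕ →₀ ℕ) (k : ℕ) (hp : ∀ m, k ≤ m → Λ m = 0) :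
    (wt Λ : ℤ) ≤ ((k:ℤ) - 1) * (deg Λ : ℤ) := by
  unfold wt deg Finsupp.sum
  push_cast
  rw [Finset.mul_sum]
  apply Finset.sum_le_sum
  intro m hm
  have hmk : m < k := by
    by_contra h
    exact Finsupp.mem_support_iff.mp hm (hp m (by omega))
  have h1 : (m:ℤ) ≤ (k:ℤ) - 1 := by omega
  exact mul_le_mul_of_nonneg_right h1 (by positivity)

theorem stmt11 (n : ℕ) (hn : 3 ≤ n) (i : ℤ) (hi : 0 ≤ i) (Λ : ℕ →₀ ℕ) (k : ℕ)
    (hb : IsBasisElt n Λ k) :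
    (Λ, k) ∈ Lset n i ↔
      ((n : ℤ) - k ≤ WD n Λ k ∧ WD n Λ k < rr n i) ∧ lev n i Λ k = i := by
  obtain ⟨hk1, hkn, h0, hparts⟩ := hb
  have hd0 : (0:ℤ) ≤ (deg Λ : ℤ) := Int.natCast_nonneg _
  have hwd : (deg Λ : ℤ) ≤ (wt Λ : ℤ) := by exact_mod_cast deg_le_wt Λ h0
  have hwu : (wt Λ : ℤ) ≤ ((k:ℤ) - 1) * (deg Λ : ℤ) := wt_le_int Λ k hparts
  have hW1 : (n:ℤ) - k ≤ WD n Λ k := by unfold WD; omega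
  have hW2 : WD n Λ k ≤ ((k:ℤ) - 2) * (deg Λ : ℤ) + (n:ℤ) - k := by
    unfold WD; linarith
  have hrng := rr_bounds n hn i
  have hhn0 := hh_nonneg n hn i (by omega)
  have hdecomp : i = (hh n i - 1) * ((n:ℤ) - 1) + rr n i := by unfold rr; ring
  have hhm1 : hh n (-1 : ℤ) = 0 := by
    have h := hh_eval n hn 0 ((n:ℤ) - 2) (by omega) (by omega)
    rw [show ((0:ℤ) - 1) * ((n:ℤ) - 1) + ((n:ℤ) - 2) = -1 by ring] at h
    exact h
  simp only [Lset, Set.mem_setOf_eq]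
  constructor
  · rintro ⟨-, hlev, hmin⟩
    refine ⟨⟨hW1, ?_⟩, hlev⟩
    by_contra hWr
    push_neg at hWr
    unfold lev at hlev
    -- deg ≥ 1
    have hd1 : 1 ≤ (deg Λ : ℤ) := by
      by_contra hd
      have hdeg0 : (deg Λ : ℤ) = 0 := by omega
      have hlm1 : lev n (-1) Λ k = -1 := by
        unfold lev
        rw [hhm1, hdeg0]
        ring
      have := hmin (-1) (by omega) hlm1
      omega
    -- hh n i ≥ 1
    have hh1 : 1 ≤ hh n i := by
      by_contra hc
      have hz : hh n i = 0 := by omega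
      rw [hz] at hlev hdecomp
      rw [zero_mul] at hlev
      have hd : (deg Λ : ℤ) = 1 := by omega
      rw [hd, mul_one] at hW2
      omega
    have hkey : hh n i * (WD n Λ k - (n:ℤ) + 1) = rr n i + 2 - (n:ℤ) - (deg Λ : ℤ) := by
      linear_combination hlev + hdecomp
    have hWn1 : WD n Λ k ≤ (n:ℤ) - 1 := by
      by_contra hc
      push_neg at hc
      have hp : 0 < hh n i * (WD n Λ k - (n:ℤ) + 1) :=
        mul_pos (by omega) (by omega)
      rw [hkey] at hp
      omega
    have hWn2 : WD n Λ k ≤ (n:ℤ) - 2 := by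
      by_contra hc
      push_neg at hc
      have hWeq : WD n Λ k = (n:ℤ) - 1 := by omega
      rw [hWeq] at hkey
      rw [show (n:ℤ) - 1 - (n:ℤ) + 1 = 0 by ring, mul_zero] at hkey
      have hd : (deg Λ : ℤ) = 1 := by omega
      rw [hd, mul_one] at hW2
      omega
    -- the smaller index j = i - WD
    have hhj : hh n (i - WD n Λ k) = hh n i - 1 := by
      have h := hh_eval n hn (hh n i - 1) (rr n i - WD n Λ k + (n:ℤ) - 1) (by omega) (by omega)
      rw [show (hh n i - 1 - 1) * ((n:ℤ) - 1) + (rr n i - WD n Λ k + (n:ℤ) - 1)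
          = (hh n i - 1) * ((n:ℤ) - 1) + rr n i - WD n Λ k by ring, ← hdecomp] at h
      exact h
    have hlevj : lev n (i - WD n Λ k) Λ k = i - WD n Λ k := by
      unfold lev
      rw [hhj]
      linear_combination hlev
    have hjge : (-1 : ℤ) ≤ i - WD n Λ k := by
      have h1 : 0 ≤ (hh n i - 1) * WD n Λ k := mul_nonneg (by omega) (by omega)
      have h2 : (hh n i - 1) * WD n Λ k = i - WD n Λ k - (deg Λ : ℤ) + 1 := by
        linear_combination hlev
      omega
    have := hmin (i - WD n Λ k) hjge hlevj
    omega
  · rintro ⟨⟨-, hWr⟩, hlev⟩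
    refine ⟨⟨hk1, hkn, h0, hparts⟩, hlev, ?_⟩
    intro j hj hlevj
    by_contra hc
    push_neg at hc
    have hrngj := rr_bounds n hn j
    have hdecompj : j = (hh n j - 1) * ((n:ℤ) - 1) + rr n j := by unfold rr; ring
    unfold lev at hlev hlevj
    have hW0 : 0 ≤ WD n Λ k := by omega
    have hdiff : (hh n i - hh n j) * WD n Λ k = i - j := by
      linear_combination hlev - hlevj
    have hm1 : 1 ≤ hh n i - hh n j := by
      by_contra h
      push_neg at h
      have h2 : (hh n i - hh n j) * WD n Λ k ≤ 0 * WD n Λ k :=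
        mul_le_mul_of_nonneg_right (by omega) hW0
      rw [zero_mul] at h2
      linarith
    have hkey2 : (hh n i - hh n j) * (WD n Λ k - (n:ℤ) + 1) = rr n i - rr n j := by
      linear_combination hlev - hlevj + hdecomp - hdecompj
    have hstep : (hh n i - hh n j) * (WD n Λ k - (n:ℤ) + 1) ≤ WD n Λ k - (n:ℤ) + 1 := by
      nlinarith [mul_nonneg (show (0:ℤ) ≤ hh n i - hh n j - 1 by omega)
        (show (0:ℤ) ≤ (n:ℤ) - 1 - WD n Λ k by omega)]
    linarith [hrng.1, hrng.2, hrngj.1, hrngj.2]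
end

section
/- The basis element (Λ, 3) with Λ consisting of three parts equal to 2 (i.e., x_2^3 ∂_3, which requires n ≥ 3) satisfies WD(Λ, 3) = n, and hence lev_i(Λ, 3) > i for every i ≥ −1; consequently (Λ, 3) ∉ N_i for all i, so the union of the chain (N_i) is a proper subset of the set of all basis elements. -/
theorem stmt19 (n : ℕ) (hn : 3 ≤ n) :
    WD n (Finsupp.single 2 3) 3 = (n : ℤ) ∧
    (∀ i : ℤ, -1 ≤ i → i < lev n i (Finsupp.single 2 3) 3) ∧
    (∀ i : ℤ, (Finsupp.single 2 3, 3) ∉ Nset n i) ∧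
    (⋃ i : ℤ, Nset n i) ⊂ {p : (ℕ →₀ ℕ) × ℕ | IsBasisElt n p.1 p.2} := by

  have hwt : wt (Finsupp.single 2 3) = 6 := by
    simp [wt, Finsupp.sum_single_index]
  have hdeg : deg (Finsupp.single 2 3) = 3 := by
    simp [deg, Finsupp.sum_single_index]
  have hWD : WD n (Finsupp.single 2 3) 3 = (n : ℤ) := by
    simp only [WD, hwt, hdeg]; push_cast; ring
  have hnpos : (0:ℤ) < (n:ℤ) - 1 := by
    have : (3:ℤ) ≤ (n:ℤ) := by exact_mod_cast hn
    omega
  have hlev : ∀ i : ℤ, -1 ≤ i → i < lev n i (Finsupp.single 2 3) 3 := by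
    intro i hi
    have h3 : (3:ℤ) ≤ (n:ℤ) := by exact_mod_cast hn
    have hq : -1 ≤ (i - 1).fdiv ((n:ℤ) - 1) := by
      rw [Int.fdiv_eq_ediv_of_nonneg _ (le_of_lt hnpos)]
      rw [Int.le_ediv_iff_mul_le hnpos]
      omega
    have hlt : i - 1 < ((i - 1).fdiv ((n:ℤ) - 1) + 1) * ((n:ℤ) - 1) := by
      rw [Int.fdiv_eq_ediv_of_nonneg _ (le_of_lt hnpos)]
      exact Int.lt_ediv_add_one_mul_self _ hnpos
    set q := (i - 1).fdiv ((n:ℤ) - 1) with hqdef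
    have : lev n i (Finsupp.single 2 3) 3 = (q + 1) * n + 2 := by
      simp [lev, hh, hWD, hdeg, ← hqdef]; ring
    rw [this]
    nlinarith
  have hnot : ∀ i : ℤ, (Finsupp.single 2 3, 3) ∉ Nset n i := by
    intro i ⟨_, j, hj1, _, hj3⟩
    exact absurd hj3 (not_le.mpr (hlev j hj1))
  refine ⟨hWD, hlev, hnot, ?_, ?_⟩
  · intro p hp
    rcases Set.mem_iUnion.mp hp with ⟨i, hpi⟩
    exact hpi.1
  · intro hsub
    have hbasis : IsBasisElt n (Finsupp.single 2 3) 3 := by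
      refine ⟨by norm_num, hn, ?_, ?_⟩
      · exact Finsupp.single_eq_of_ne (by norm_num)
      · intro m hm; exact Finsupp.single_eq_of_ne (by omega)
    have h2 : ((Finsupp.single 2 3 : ℕ →₀ ℕ), 3) ∈ ⋃ i : ℤ, Nset n i := hsub hbasis
    rcases Set.mem_iUnion.mp h2 with ⟨i, hpi⟩
    exact hnot i hpi
end
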